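/- Assume that for every finite poset P there exists a constant C(P) such that every family of subsets of [k] with no induced copy of P has size at most C(P)·C(k,⌊k/2⌋) (the Methuku–Pálvölgyi theorem). Then for every finite poset P and every c > 1/2: for all n and all 0 ≤ a ≤ b ≤ n, if A ⊆ 2^[n] has no induced copy of P and every set in A has cardinality between a and b, then l_n(A) = O((b−a)^c), with the implicit constant depending only on P and c. -/

import Mathlib

/-- A family `𝒜 ⊆ 2^[n]` contains the poset `P` as an induced subposet. -/
def containsInduced {n : ℕ} (𝒜 : Finset (Finset (Fin n))) (P : Type*) [PartialOrder P] :
    Prop :=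
  ∃ φ : P → Finset (Fin n), Function.Injective φ ∧ (∀ x, φ x ∈ 𝒜) ∧
    ∀ x y : P, x ≤ y ↔ φ x ⊆ φ y

open Finset

theorem chain_identity {n q p i : ℕ} (hpi : p ≤ i) (hiq : i ≤ q) (hqn : q ≤ n) :
    i.choose p * (n - i).choose (q - i) * n.choose i
      = n.choose q * q.choose p * (q - p).choose (i - p) := by
  have h1 : n.choose i * i.choose p = n.choose p * (n - p).choose (i - p) :=
    Nat.choose_mul hpi
  have h2 : n.choose q * q.choose p = n.choose p * (n - p).choose (q - p) :=
    Nat.choose_mul (hpi.trans hiq)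
  have h3 : (n - p).choose (q - p) * (q - p).choose (i - p)
      = (n - p).choose (i - p) * (n - p - (i - p)).choose (q - p - (i - p)) :=
    Nat.choose_mul (by omega)
  have e1 : n - p - (i - p) = n - i := by omega
  have e2 : q - p - (i - p) = q - i := by omega
  rw [e1, e2] at h3
  calc i.choose p * (n - i).choose (q - i) * n.choose i
      = n.choose i * i.choose p * (n - i).choose (q - i) := by ring
    _ = n.choose p * ((n - p).choose (i - p) * (n - i).choose (q - i)) := by rw [h1]; ring
    _ = n.choose p * ((n - p).choose (q - p) * (q - p).choose (i - p)) := by rw [h3]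
    _ = n.choose q * q.choose p * (q - p).choose (i - p) := by rw [h2]; ring

theorem card_supersets {n q : ℕ} (A : Finset (Fin n)) (hAq : A.card ≤ q) :
    ((univ.powersetCard q).filter (fun T => A ⊆ T)).card
      = (n - A.card).choose (q - A.card) := by
  have : ((univ.powersetCard q).filter (fun T => A ⊆ T)).card
      = ((univ \ A).powersetCard (q - A.card)).card := by
    apply Finset.card_nbij' (fun T => T \ A) (fun U => U ∪ A)
    · intro T hT
      simp only [mem_coe, mem_filter, mem_powersetCard] at hT ⊢
      obtain ⟨⟨-, hcard⟩, hsub⟩ := hT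
      exact ⟨sdiff_subset_sdiff (subset_univ _) le_rfl,
        by rw [card_sdiff_of_subset hsub, hcard]⟩
    · intro U hU
      simp only [mem_coe, mem_filter, mem_powersetCard] at hU ⊢
      obtain ⟨hsub, hcard⟩ := hU
      have hdisj : Disjoint U A := disjoint_of_subset_left hsub sdiff_disjoint
      constructor
      · refine ⟨subset_univ _, ?_⟩
        rw [card_union_of_disjoint hdisj, hcard]
        omega
      · exact subset_union_right
    · intro T hT
      simp only [mem_coe, mem_filter, mem_powersetCard] at hT
      exact sdiff_union_of_subset hT.2
    · intro U hU
      simp only [mem_coe, mem_powersetCard] at hU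
      have hdisj : Disjoint U A := disjoint_of_subset_left hU.1 sdiff_disjoint
      exact union_sdiff_cancel_right hdisj
  rw [this, card_powersetCard, card_sdiff_of_subset (subset_univ _), card_univ, Fintype.card_fin]

theorem sub_free {n : ℕ} {P : Type*} [PartialOrder P] {𝒜 ℬ : Finset (Finset (Fin n))}
    (hsub : ℬ ⊆ 𝒜) (hfree : ¬ containsInduced 𝒜 P) : ¬ containsInduced ℬ P := by
  rintro ⟨φ, h1, h2, h3⟩
  exact hfree ⟨φ, h1, fun x => hsub (h2 x), h3⟩


theorem window_card {n : ℕ} {P : Type*} [PartialOrder P] {C : ℝ}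
    (hC : ∀ k : ℕ, ∀ ℬ : Finset (Finset (Fin k)),
      ¬ containsInduced ℬ P → (ℬ.card : ℝ) ≤ C * (k.choose (k / 2)))
    (𝒜 : Finset (Finset (Fin n))) (hfree : ¬ containsInduced 𝒜 P)
    (S T : Finset (Fin n)) (hST : S ⊆ T) :
    (((𝒜.filter (fun A => S ⊆ A ∧ A ⊆ T)).card : ℝ)) ≤
      C * (((T.card - S.card).choose ((T.card - S.card) / 2) : ℕ) : ℝ) := by
  classical
  set D := T \ S with hD
  set k := D.card with hk
  set f : Fin k → Fin n := fun j => (D.equivFin.symm j : Fin n) with hf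
  have hfD : ∀ j, f j ∈ D := fun j => (D.equivFin.symm j).2
  set Φ : Finset (Fin n) → Finset (Fin k) :=
    fun A => univ.filter (fun j => f j ∈ A) with hΦ
  set ℱ := 𝒜.filter (fun A => S ⊆ A ∧ A ⊆ T) with hℱ
  -- key order property
  have key : ∀ A ∈ ℱ, ∀ A' ∈ ℱ, (Φ A ⊆ Φ A' ↔ A ⊆ A') := by
    intro A hA A' hA'
    rw [hℱ, mem_filter] at hA hA'
    constructor
    · intro h x hx
      by_cases hxS : x ∈ S
      · exact hA'.2.1 hxS
      · have hxD : x ∈ D := mem_sdiff.mpr ⟨hA.2.2 hx, hxS⟩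
        set j : Fin k := D.equivFin ⟨x, hxD⟩ with hj
        have hfj : f j = x := by simp [hf, hj]
        have : j ∈ Φ A := by simp [hΦ, hfj, hx]
        have := h this
        simp only [hΦ, mem_filter, hfj] at this
        exact this.2
    · intro h j hjA
      simp only [hΦ, mem_filter] at hjA ⊢
      exact ⟨mem_univ _, h hjA.2⟩
  have hinjOn : Set.InjOn Φ ℱ := by
    intro A hA A' hA' hEq
    exact Finset.Subset.antisymm
      ((key A hA A' hA').1 hEq.le) ((key A' hA' A hA).1 hEq.ge)
  set ℬ := ℱ.image Φ with hℬ
  have hcard : ℱ.card = ℬ.card := (Finset.card_image_of_injOn hinjOn).symm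
  have hfreeB : ¬ containsInduced ℬ P := by
    rintro ⟨φ, hinj, hmem, hiff⟩
    apply hfree
    have hspec : ∀ x : P, ∃ A, A ∈ ℱ ∧ Φ A = φ x := by
      intro x
      obtain ⟨A, hA, hA2⟩ := Finset.mem_image.mp (hmem x)
      exact ⟨A, hA, hA2⟩
    set ψ : P → Finset (Fin n) := fun x => (hspec x).choose with hψ
    have hψF : ∀ x, ψ x ∈ ℱ := fun x => (hspec x).choose_spec.1
    have hψΦ : ∀ x, Φ (ψ x) = φ x := fun x => (hspec x).choose_spec.2
    refine ⟨ψ, ?_, fun x => (Finset.mem_filter.mp (hψF x)).1, ?_⟩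
    · intro x y hxy
      apply hinj
      rw [← hψΦ x, ← hψΦ y, hxy]
    · intro x y
      rw [hiff x y, ← hψΦ x, ← hψΦ y, key _ (hψF x) _ (hψF y)]
  have hbound := hC k ℬ hfreeB
  have hkm : k = T.card - S.card := by rw [hk, hD, card_sdiff_of_subset hST]
  rw [← hkm, ← hcard] at *
  exact hbound

theorem double_count {n p q : ℕ} (𝒜 : Finset (Finset (Fin n)))
    (hcards : ∀ A ∈ 𝒜, A.card ≤ q) :
    ∑ T ∈ univ.powersetCard q, ∑ S ∈ T.powersetCard p,
        (𝒜.filter (fun A => S ⊆ A ∧ A ⊆ T)).card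
      = ∑ A ∈ 𝒜, (A.card.choose p) * ((n - A.card).choose (q - A.card)) := by
  classical
  have step1 : ∀ T : Finset (Fin n), ∀ S : Finset (Fin n),
      (𝒜.filter (fun A => S ⊆ A ∧ A ⊆ T)).card
        = ∑ A ∈ 𝒜, if S ⊆ A ∧ A ⊆ T then 1 else 0 := by
    intro T S; rw [Finset.card_filter]
  calc ∑ T ∈ univ.powersetCard q, ∑ S ∈ T.powersetCard p,
        (𝒜.filter (fun A => S ⊆ A ∧ A ⊆ T)).card
      = ∑ T ∈ univ.powersetCard q, ∑ A ∈ 𝒜, ∑ S ∈ T.powersetCard p,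
          (if S ⊆ A ∧ A ⊆ T then 1 else 0) := by
        refine Finset.sum_congr rfl fun T _ => ?_
        simp only [step1]
        exact Finset.sum_comm
    _ = ∑ A ∈ 𝒜, ∑ T ∈ univ.powersetCard q, ∑ S ∈ T.powersetCard p,
          (if S ⊆ A ∧ A ⊆ T then 1 else 0) := Finset.sum_comm
    _ = ∑ A ∈ 𝒜, (A.card.choose p) * ((n - A.card).choose (q - A.card)) := by
        refine Finset.sum_congr rfl fun A hA => ?_
        have inner : ∀ T : Finset (Fin n), T.card = q →
            (∑ S ∈ T.powersetCard p, if S ⊆ A ∧ A ⊆ T then 1 else 0)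
              = if A ⊆ T then A.card.choose p else 0 := by
          intro T hT
          by_cases hAT : A ⊆ T
          · simp only [hAT, and_true, if_true]
            have : ∑ S ∈ T.powersetCard p, (if S ⊆ A then 1 else 0)
                = ((T.powersetCard p).filter (fun S => S ⊆ A)).card :=
              (Finset.card_filter _ _).symm
            rw [this]
            have hset : (T.powersetCard p).filter (fun S => S ⊆ A)
                = A.powersetCard p := by
              ext S
              simp only [mem_filter, mem_powersetCard]
              constructor
              · rintro ⟨⟨-, hcard⟩, hSA⟩; exact ⟨hSA, hcard⟩
              · rintro ⟨hSA, hcard⟩; exact ⟨⟨hSA.trans hAT, hcard⟩, hSA⟩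
            rw [hset, card_powersetCard]
          · simp only [hAT, and_false, if_false, Finset.sum_const_zero]
        calc ∑ T ∈ univ.powersetCard q, ∑ S ∈ T.powersetCard p,
              (if S ⊆ A ∧ A ⊆ T then 1 else 0)
            = ∑ T ∈ univ.powersetCard q, if A ⊆ T then A.card.choose p else 0 := by
              refine Finset.sum_congr rfl fun T hT => ?_
              exact inner T (mem_powersetCard.mp hT).2
          _ = ((univ.powersetCard q).filter (fun T => A ⊆ T)).card * A.card.choose p := by
              rw [← Finset.sum_filter, Finset.sum_const, smul_eq_mul]
          _ = (A.card.choose p) * ((n - A.card).choose (q - A.card)) := by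
              rw [card_supersets A (hcards A hA), mul_comm]

theorem window_sum {n p q : ℕ} {P : Type*} [PartialOrder P] {C : ℝ}
    (hC : ∀ k : ℕ, ∀ ℬ : Finset (Finset (Fin k)),
      ¬ containsInduced ℬ P → (ℬ.card : ℝ) ≤ C * (k.choose (k / 2)))
    (hpq : p ≤ q) (hqn : q ≤ n)
    (𝒜 : Finset (Finset (Fin n))) (hfree : ¬ containsInduced 𝒜 P)
    (hcards : ∀ A ∈ 𝒜, p ≤ A.card ∧ A.card ≤ q) :
    ∑ A ∈ 𝒜, (((q - p).choose (A.card - p) : ℕ) : ℝ) / (n.choose A.card)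
      ≤ C * (((q - p).choose ((q - p) / 2) : ℕ) : ℝ) := by
  classical
  set M : ℝ := C * (((q - p).choose ((q - p) / 2) : ℕ) : ℝ) with hM
  have hNQ : (0 : ℝ) < (n.choose q : ℕ) := by
    exact_mod_cast Nat.choose_pos hqn
  have hQP : (0 : ℝ) < (q.choose p : ℕ) := by
    exact_mod_cast Nat.choose_pos hpq
  have upper : ((∑ T ∈ univ.powersetCard q, ∑ S ∈ T.powersetCard p,
      (𝒜.filter (fun A => S ⊆ A ∧ A ⊆ T)).card : ℕ) : ℝ)
      ≤ (n.choose q : ℕ) * ((q.choose p : ℕ) * M) := by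
    push_cast
    calc ∑ T ∈ univ.powersetCard q, ∑ S ∈ T.powersetCard p,
          ((𝒜.filter (fun A => S ⊆ A ∧ A ⊆ T)).card : ℝ)
        ≤ ∑ T ∈ univ.powersetCard q, ∑ S ∈ T.powersetCard p, M := by
          refine Finset.sum_le_sum fun T hT => Finset.sum_le_sum fun S hS => ?_
          have hT' := (mem_powersetCard.mp hT).2
          obtain ⟨hST, hS'⟩ := mem_powersetCard.mp hS
          have := window_card hC 𝒜 hfree S T hST
          rwa [hT', hS'] at this
      _ = ((univ.powersetCard q).card : ℝ) * (((q : ℕ).choose p : ℝ) * M) := by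
          rw [Finset.sum_congr rfl (fun T hT => ?_), Finset.sum_const, nsmul_eq_mul]
          rw [Finset.sum_const, nsmul_eq_mul, card_powersetCard,
            (mem_powersetCard.mp hT).2]
      _ = (n.choose q : ℕ) * ((q.choose p : ℕ) * M) := by
          rw [card_powersetCard, card_univ, Fintype.card_fin]
  rw [double_count 𝒜 (fun A hA => (hcards A hA).2)] at upper
  push_cast at upper
  have key : ∀ A ∈ 𝒜, (((q - p).choose (A.card - p) : ℕ) : ℝ) / (n.choose A.card)
      = ((A.card.choose p : ℕ) : ℝ) * (((n - A.card).choose (q - A.card) : ℕ) : ℝ)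
        / ((n.choose q : ℕ) * (q.choose p : ℕ)) := by
    intro A hA
    obtain ⟨h1, h2⟩ := hcards A hA
    have hid := chain_identity h1 h2 hqn
    have hNI : (0 : ℝ) < (n.choose A.card : ℕ) := by
      exact_mod_cast Nat.choose_pos (h2.trans hqn)
    rw [div_eq_div_iff hNI.ne' (by positivity)]
    have : ((n.choose q * q.choose p * (q - p).choose (A.card - p) : ℕ) : ℝ)
        = ((A.card.choose p * (n - A.card).choose (q - A.card) * n.choose A.card : ℕ) : ℝ) := by
      exact_mod_cast congrArg (Nat.cast (R := ℝ)) hid.symm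
    push_cast at this
    linarith [this]
  calc ∑ A ∈ 𝒜, (((q - p).choose (A.card - p) : ℕ) : ℝ) / (n.choose A.card)
      = ∑ A ∈ 𝒜, ((A.card.choose p : ℕ) : ℝ) * (((n - A.card).choose (q - A.card) : ℕ) : ℝ)
          / ((n.choose q : ℕ) * (q.choose p : ℕ)) := Finset.sum_congr rfl key
    _ = (∑ A ∈ 𝒜, ((A.card.choose p : ℕ) : ℝ) * (((n - A.card).choose (q - A.card) : ℕ) : ℝ))
          / ((n.choose q : ℕ) * (q.choose p : ℕ)) := by rw [Finset.sum_div]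
    _ ≤ M := by
        rw [div_le_iff₀ (by positivity)]
        calc (∑ A ∈ 𝒜, ((A.card.choose p : ℕ) : ℝ) * (((n - A.card).choose (q - A.card) : ℕ) : ℝ))
            ≤ (n.choose q : ℕ) * ((q.choose p : ℕ) * M) := upper
          _ = M * ((n.choose q : ℕ) * (q.choose p : ℕ)) := by ring

theorem ratio_lemma {m h s j : ℕ} (hhm : 2 * h ≤ m) (hmh : m - h ≤ h + 1)
    (hsh : s ≤ h) (hjl : h - s ≤ j) (hju : j ≤ h + s)
    (hcond : s * s ≤ 5 * (h - s + 1)) :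
    (m.choose h : ℝ) ≤ Real.exp 10 * (m.choose j : ℝ) := by
  have claim1 : ∀ t r, h - s ≤ r →
      m.choose (r + t) * (h - s + 1) ^ t ≤ m.choose r * (h + s + 1) ^ t := by
    intro t
    induction t with
    | zero => intro r _; simp
    | succ t ih =>
      intro r hr
      have step : m.choose (r + t + 1) * (h - s + 1) ≤ m.choose (r + t) * (h + s + 1) := by
        have h1 : m.choose (r + t + 1) * (h - s + 1) ≤ m.choose (r + t + 1) * (r + t + 1) :=
          Nat.mul_le_mul_left _ (by omega)
        have h2 := Nat.choose_succ_right_eq m (r + t)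
        have h3 : m.choose (r + t) * (m - (r + t)) ≤ m.choose (r + t) * (h + s + 1) :=
          Nat.mul_le_mul_left _ (by omega)
        omega
      calc m.choose (r + (t + 1)) * (h - s + 1) ^ (t + 1)
          = (m.choose (r + t + 1) * (h - s + 1)) * (h - s + 1) ^ t := by
            rw [show r + (t + 1) = r + t + 1 from rfl, pow_succ]; ring
        _ ≤ (m.choose (r + t) * (h + s + 1)) * (h - s + 1) ^ t :=
            Nat.mul_le_mul_right _ step
        _ = (m.choose (r + t) * (h - s + 1) ^ t) * (h + s + 1) := by ring
        _ ≤ (m.choose r * (h + s + 1) ^ t) * (h + s + 1) :=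
            Nat.mul_le_mul_right _ (ih r hr)
        _ = m.choose r * (h + s + 1) ^ (t + 1) := by ring
  have claim2 : ∀ t r, r + t ≤ h + s →
      m.choose r * (h - s + 1) ^ t ≤ m.choose (r + t) * (h + s + 1) ^ t := by
    intro t
    induction t with
    | zero => intro r _; simp
    | succ t ih =>
      intro r hr
      have step : m.choose (r + t) * (h - s + 1) ≤ m.choose (r + t + 1) * (h + s + 1) := by
        have h1 : m.choose (r + t) * (h - s + 1) ≤ m.choose (r + t) * (m - (r + t)) :=
          Nat.mul_le_mul_left _ (by omega)
        have h2 := Nat.choose_succ_right_eq m (r + t)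
        have h3 : m.choose (r + t + 1) * (r + t + 1) ≤ m.choose (r + t + 1) * (h + s + 1) :=
          Nat.mul_le_mul_left _ (by omega)
        omega
      calc m.choose r * (h - s + 1) ^ (t + 1)
          = (m.choose r * (h - s + 1) ^ t) * (h - s + 1) := by ring
        _ ≤ (m.choose (r + t) * (h + s + 1) ^ t) * (h - s + 1) :=
            Nat.mul_le_mul_right _ (ih r (by omega))
        _ = (m.choose (r + t) * (h - s + 1)) * (h + s + 1) ^ t := by ring
        _ ≤ (m.choose (r + t + 1) * (h + s + 1)) * (h + s + 1) ^ t :=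
            Nat.mul_le_mul_right _ step
        _ = m.choose (r + (t + 1)) * (h + s + 1) ^ (t + 1) := by
            rw [show r + (t + 1) = r + t + 1 from rfl, pow_succ]; ring
  have main : ∃ t, t ≤ s ∧
      m.choose h * (h - s + 1) ^ t ≤ m.choose j * (h + s + 1) ^ t := by
    rcases le_or_gt j h with hjh | hjh
    · refine ⟨h - j, by omega, ?_⟩
      have := claim1 (h - j) j hjl
      rwa [show j + (h - j) = h by omega] at this
    · refine ⟨j - h, by omega, ?_⟩
      have := claim2 (j - h) h (by omega)
      rwa [show h + (j - h) = j by omega] at this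
  obtain ⟨t, hts, hmain⟩ := main
  -- move to ℝ
  set ρ : ℝ := ((h + s + 1 : ℕ) : ℝ) / ((h - s + 1 : ℕ) : ℝ) with hρ
  have hden : (0 : ℝ) < ((h - s + 1 : ℕ) : ℝ) := by positivity
  have hρ1 : (1 : ℝ) ≤ ρ := by
    rw [hρ, le_div_iff₀ hden, one_mul]
    exact_mod_cast (by omega : h - s + 1 ≤ h + s + 1)
  have hR : (m.choose h : ℝ) ≤ ρ ^ t * (m.choose j : ℝ) := by
    have hrw : ρ ^ t * (m.choose j : ℝ)
        = ((h + s + 1 : ℕ) : ℝ) ^ t * (m.choose j : ℝ) / ((h - s + 1 : ℕ) : ℝ) ^ t := by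
      rw [hρ, div_pow]; ring
    rw [hrw, le_div_iff₀ (by positivity)]
    have hc : ((m.choose h * (h - s + 1) ^ t : ℕ) : ℝ)
        ≤ ((m.choose j * (h + s + 1) ^ t : ℕ) : ℝ) := by exact_mod_cast hmain
    push_cast at hc ⊢
    nlinarith [hc]
  have hρexp : ρ ^ t ≤ Real.exp 10 := by
    have h1 : ρ ≤ Real.exp ((2 * s : ℝ) / ((h - s + 1 : ℕ) : ℝ)) := by
      have e : (h + s + 1 : ℕ) = (h - s + 1) + 2 * s := by omega
      have : ρ = 1 + (2 * s : ℝ) / ((h - s + 1 : ℕ) : ℝ) := by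
        rw [hρ, e, Nat.cast_add, add_div, div_self hden.ne']
        push_cast; ring
      rw [this]
      have := Real.add_one_le_exp ((2 * s : ℝ) / ((h - s + 1 : ℕ) : ℝ))
      linarith
    calc ρ ^ t ≤ ρ ^ s := pow_le_pow_right₀ hρ1 hts
      _ ≤ (Real.exp ((2 * s : ℝ) / ((h - s + 1 : ℕ) : ℝ))) ^ s :=
          pow_le_pow_left₀ (by positivity) h1 s
      _ = Real.exp ((s : ℝ) * ((2 * s : ℝ) / ((h - s + 1 : ℕ) : ℝ))) := by
          rw [← Real.exp_nat_mul]
      _ ≤ Real.exp 10 := by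
          apply Real.exp_le_exp.mpr
          rw [mul_div_assoc']
          rw [div_le_iff₀ hden]
          have hc2 : ((2 * (s * s) : ℕ) : ℝ) ≤ ((10 * (h - s + 1) : ℕ) : ℝ) := by
            exact_mod_cast (by omega : 2 * (s * s) ≤ 10 * (h - s + 1))
          push_cast at hc2 ⊢
          nlinarith [hc2]
  calc (m.choose h : ℝ) ≤ ρ ^ t * (m.choose j : ℝ) := hR
    _ ≤ Real.exp 10 * (m.choose j : ℝ) := by
        apply mul_le_mul_of_nonneg_right hρexp (by positivity)

theorem band_bound {n p q : ℕ} {P : Type*} [PartialOrder P] {C : ℝ}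
    (hC : ∀ k : ℕ, ∀ ℬ : Finset (Finset (Fin k)),
      ¬ containsInduced ℬ P → (ℬ.card : ℝ) ≤ C * (k.choose (k / 2)))
    (hpq : p ≤ q) (hqn : q ≤ n)
    (𝒜 : Finset (Finset (Fin n))) (hfree : ¬ containsInduced 𝒜 P)
    (hcards : ∀ A ∈ 𝒜, p ≤ A.card ∧ A.card ≤ q)
    (hband : ∀ A ∈ 𝒜, (((q - p).choose ((q - p) / 2) : ℕ) : ℝ)
      ≤ Real.exp 10 * (((q - p).choose (A.card - p) : ℕ) : ℝ)) :
    ∑ A ∈ 𝒜, (1 : ℝ) / (n.choose A.card) ≤ Real.exp 10 * C := by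
  set B : ℝ := (((q - p).choose ((q - p) / 2) : ℕ) : ℝ) with hB
  have hBpos : (0 : ℝ) < B := by
    rw [hB]
    exact_mod_cast Nat.choose_pos (Nat.div_le_self _ _)
  have key : B * ∑ A ∈ 𝒜, (1 : ℝ) / (n.choose A.card)
      ≤ Real.exp 10 * (C * B) := by
    rw [Finset.mul_sum]
    calc ∑ A ∈ 𝒜, B * ((1 : ℝ) / (n.choose A.card))
        ≤ ∑ A ∈ 𝒜, Real.exp 10 * ((((q - p).choose (A.card - p) : ℕ) : ℝ) / (n.choose A.card)) := by
          refine Finset.sum_le_sum fun A hA => ?_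
          have hpos : (0 : ℝ) < (n.choose A.card : ℕ) := by
            exact_mod_cast Nat.choose_pos ((hcards A hA).2.trans hqn)
          rw [mul_one_div, ← mul_div_assoc]
          gcongr
          exact hband A hA
      _ = Real.exp 10 * ∑ A ∈ 𝒜, ((((q - p).choose (A.card - p) : ℕ) : ℝ) / (n.choose A.card)) := by
          rw [Finset.mul_sum]
      _ ≤ Real.exp 10 * (C * B) := by
          refine mul_le_mul_of_nonneg_left ?_ (Real.exp_pos _).le
          exact window_sum hC hpq hqn 𝒜 hfree hcards
  have key2 : B * (∑ A ∈ 𝒜, (1 : ℝ) / (n.choose A.card)) ≤ B * (Real.exp 10 * C) := by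
    calc B * (∑ A ∈ 𝒜, (1 : ℝ) / (n.choose A.card)) ≤ Real.exp 10 * (C * B) := key
      _ = B * (Real.exp 10 * C) := by ring
  exact (mul_le_mul_iff_right₀ hBpos).mp key2

theorem trivial_bound {n : ℕ} (𝒜 : Finset (Finset (Fin n))) :
    ∑ A ∈ 𝒜, (1 : ℝ) / (n.choose A.card) ≤ (n : ℝ) + 1 := by
  classical
  have hmaps : ∀ A ∈ 𝒜, A.card ∈ Finset.range (n + 1) := by
    intro A _
    rw [Finset.mem_range]
    have := A.card_le_univ
    rw [Fintype.card_fin] at this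
    omega
  rw [← Finset.sum_fiberwise_of_maps_to hmaps]
  calc ∑ i ∈ Finset.range (n + 1), ∑ A ∈ 𝒜.filter (fun A => A.card = i),
        (1 : ℝ) / (n.choose A.card)
      ≤ ∑ i ∈ Finset.range (n + 1), (1 : ℝ) := by
        refine Finset.sum_le_sum fun i hi => ?_
        have hin : i ≤ n := by rw [Finset.mem_range] at hi; omega
        have hpos : (0 : ℝ) < (n.choose i : ℕ) := by exact_mod_cast Nat.choose_pos hin
        have hcard : (𝒜.filter (fun A => A.card = i)).card ≤ n.choose i := by
          have hsub : 𝒜.filter (fun A => A.card = i) ⊆ univ.powersetCard i := by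
            intro A hA
            rw [Finset.mem_filter] at hA
            exact Finset.mem_powersetCard.mpr ⟨Finset.subset_univ _, hA.2⟩
          have := Finset.card_le_card hsub
          rwa [card_powersetCard, card_univ, Fintype.card_fin] at this
        calc ∑ A ∈ 𝒜.filter (fun A => A.card = i), (1 : ℝ) / (n.choose A.card)
            = ∑ A ∈ 𝒜.filter (fun A => A.card = i), (1 : ℝ) / (n.choose i) := by
              refine Finset.sum_congr rfl fun A hA => ?_
              rw [(Finset.mem_filter.mp hA).2]
          _ = ((𝒜.filter (fun A => A.card = i)).card : ℝ) / (n.choose i) := by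
              rw [Finset.sum_const, nsmul_eq_mul, mul_one_div]
          _ ≤ 1 := by
              rw [div_le_one hpos]
              exact_mod_cast hcard
    _ = (n : ℝ) + 1 := by rw [Finset.sum_const, Finset.card_range, nsmul_eq_mul, mul_one]; push_cast; ring

/-- Assuming the Methuku–Pálvölgyi theorem (every induced-`P`-free family in `2^[k]` has
size at most `C(P)·C(k,⌊k/2⌋)`), for every `c > 1/2` there is a constant `K` such that
every induced-`P`-free family `𝒜 ⊆ 2^[n]` whose members have cardinality between `a`
and `b` has Lubell function `l_n(𝒜) = Σ_{A∈𝒜} 1/C(n,|A|) ≤ K·(b-a)^c` (with `b-a`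
interpreted as `b-a+1` so that the big-O bound covers the degenerate case `a = b`). -/
theorem lubell_induced_interval_bound (P : Type*) [PartialOrder P] [Fintype P]
    (hMP : ∃ C : ℝ, ∀ k : ℕ, ∀ ℬ : Finset (Finset (Fin k)),
      ¬ containsInduced ℬ P → (ℬ.card : ℝ) ≤ C * (k.choose (k / 2))) :
    ∀ c : ℝ, 1 / 2 < c → ∃ K : ℝ, ∀ n a b : ℕ, a ≤ b → b ≤ n →
      ∀ 𝒜 : Finset (Finset (Fin n)), ¬ containsInduced 𝒜 P →
        (∀ A ∈ 𝒜, a ≤ A.card ∧ A.card ≤ b) →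
        ∑ A ∈ 𝒜, (1 : ℝ) / (n.choose A.card) ≤ K * (((b - a : ℕ) : ℝ) + 1) ^ c := by
  classical
  intro c hc
  obtain ⟨C, hC⟩ := hMP
  by_cases hP : Nonempty P
  swap
  · refine ⟨1, fun n a b hab hbn 𝒜 hfree hcards => absurd ?_ hfree⟩
    have : IsEmpty P := not_nonempty_iff.mp hP
    exact ⟨fun x => isEmptyElim x, fun x => isEmptyElim x, fun x => isEmptyElim x,
      fun x y => isEmptyElim x⟩
  have hC0 : 0 ≤ C := by
    have hfree0 : ¬ containsInduced (∅ : Finset (Finset (Fin 0))) P := by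
      rintro ⟨φ, -, hmem, -⟩
      exact (Finset.notMem_empty _) (hmem (Classical.arbitrary P))
    have := hC 0 ∅ hfree0
    simpa using this
  set B : ℝ := Real.exp 10 * C with hBdef
  have hB0 : 0 ≤ B := mul_nonneg (Real.exp_pos _).le hC0
  refine ⟨5 * B + 10002, ?_⟩
  intro n a b hab hbn 𝒜 hfree hcards
  set d : ℕ := b - a with hd
  set X : ℝ := ((d : ℕ) : ℝ) + 1 with hX
  have hX1 : (1 : ℝ) ≤ X := by
    rw [hX]; have : (0:ℝ) ≤ ((d : ℕ) : ℝ) := Nat.cast_nonneg _; linarith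
  have hXc1 : (1 : ℝ) ≤ X ^ c := Real.one_le_rpow hX1 (by linarith)
  have hXc0 : (0 : ℝ) ≤ X ^ c := by positivity
  rcases le_or_gt n 10000 with hn | hn
  · calc ∑ A ∈ 𝒜, (1 : ℝ) / (n.choose A.card) ≤ (n : ℝ) + 1 := trivial_bound 𝒜
      _ ≤ 10001 := by
          have : (n : ℝ) ≤ 10000 := by exact_mod_cast hn
          linarith
      _ ≤ (5 * B + 10002) * X ^ c := by nlinarith [hXc1, hB0]
  -- main case : n > 10000
  set s : ℕ := Nat.sqrt d with hs
  set t : ℕ := Nat.sqrt n with ht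
  have hsd : s * s ≤ d := Nat.sqrt_le d
  have htn : t * t ≤ n := Nat.sqrt_le n
  have hst : s ≤ t := Nat.sqrt_le_sqrt (by omega)
  have h100 : 100 * t ≤ n := by
    rcases le_or_gt t 99 with h | h
    · omega
    · have := Nat.mul_le_mul_right t (by omega : 100 ≤ t)
      omega
  have hs1 : (s + 1) * (s + 1) ≤ n + 2 * t + 1 := by nlinarith [hsd, hst]
  -- classification
  set kf : Finset (Fin n) → ℕ := fun A => Nat.sqrt (A.card - a) with hkf
  set kg : Finset (Fin n) → ℕ := fun A => Nat.sqrt (b - A.card) with hkg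
  set P1 : Finset (Fin n) → Prop := fun A => 2 * (a + kf A * kf A + kf A) ≤ n with hP1
  set P2 : Finset (Fin n) → Prop := fun A => n ≤ 2 * (b - kg A * kg A - kg A) with hP2
  set 𝒜₁ := 𝒜.filter P1 with h𝒜₁
  set ℛ := 𝒜.filter (fun A => ¬ P1 A) with hℛ
  set 𝒜₂ := ℛ.filter P2 with h𝒜₂
  set 𝒜₃ := ℛ.filter (fun A => ¬ P2 A) with h𝒜₃
  have hsplit : ∑ A ∈ 𝒜, (1 : ℝ) / (n.choose A.card)
      = (∑ A ∈ 𝒜₁, (1 : ℝ) / (n.choose A.card))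
        + ((∑ A ∈ 𝒜₂, (1 : ℝ) / (n.choose A.card))
          + (∑ A ∈ 𝒜₃, (1 : ℝ) / (n.choose A.card))) := by
    rw [h𝒜₂, h𝒜₃, Finset.sum_filter_add_sum_filter_not ℛ P2, h𝒜₁, hℛ,
      Finset.sum_filter_add_sum_filter_not 𝒜 P1]
  -- Bound for 𝒜₁
  have hbound1 : ∑ A ∈ 𝒜₁, (1 : ℝ) / (n.choose A.card) ≤ ((s : ℝ) + 1) * B := by
    have hmaps : ∀ A ∈ 𝒜₁, kf A ∈ Finset.range (s + 1) := by
      intro A hA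
      rw [Finset.mem_range, Nat.lt_succ_iff, hkf, hs]
      have hcA := hcards A (Finset.mem_of_mem_filter A hA)
      exact Nat.sqrt_le_sqrt (by omega)
    rw [← Finset.sum_fiberwise_of_maps_to hmaps]
    have hinner : ∀ k ∈ Finset.range (s + 1),
        ∑ A ∈ 𝒜₁.filter (fun A => kf A = k), (1 : ℝ) / (n.choose A.card) ≤ B := by
      intro k _
      set ℱ := 𝒜₁.filter (fun A => kf A = k) with hℱ
      rcases ℱ.eq_empty_or_nonempty with hemp | ⟨A₀, hA₀⟩
      · rw [hemp, Finset.sum_empty]; exact hB0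
      · have hA₀' := Finset.mem_filter.mp hA₀
        have hkA₀ : kf A₀ = k := hA₀'.2
        have hp1A₀ : P1 A₀ := (Finset.mem_filter.mp hA₀'.1).2
        simp only [hP1, hkA₀] at hp1A₀
        -- hp1A₀ : 2 * (a + k*k + k) ≤ n
        have hsubA : ℱ ⊆ 𝒜 := fun A hA =>
          Finset.mem_of_mem_filter A ((Finset.filter_subset _ _ hA) : A ∈ 𝒜₁)
        have hfacts : ∀ A ∈ ℱ, a ≤ A.card ∧ A.card ≤ b ∧ k * k ≤ A.card - a
            ∧ A.card - a < (k+1) * (k+1) := by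
          intro A hA
          have hcA := hcards A (hsubA hA)
          have hkA : Nat.sqrt (A.card - a) = k := (Finset.mem_filter.mp hA).2
          refine ⟨hcA.1, hcA.2, ?_, ?_⟩
          · rw [← hkA]; exact Nat.sqrt_le _
          · rw [← hkA]; exact Nat.lt_succ_sqrt _
        have hexp : (k+1)*(k+1) = k*k + 2*k + 1 := by ring
        refine (band_bound hC (p := 0) (q := 2 * (a + k * k + k)) (by omega)
          hp1A₀ ℱ (sub_free hsubA hfree) ?_ ?_).trans_eq hBdef.symm
        · intro A hA
          obtain ⟨h1, h2, h3, h4⟩ := hfacts A hA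
          omega
        · intro A hA
          obtain ⟨h1, h2, h3, h4⟩ := hfacts A hA
          have hdiv : (2 * (a + k * k + k) - 0) / 2 = a + k * k + k := by omega
          rw [hdiv]
          exact ratio_lemma (s := k) (by omega) (by omega) (by omega) (by omega)
            (by omega) (by omega)
    calc ∑ k ∈ Finset.range (s + 1), ∑ A ∈ 𝒜₁.filter (fun A => kf A = k),
          (1 : ℝ) / (n.choose A.card)
        ≤ ∑ k ∈ Finset.range (s + 1), B := Finset.sum_le_sum hinner
      _ = ((s : ℝ) + 1) * B := by
          rw [Finset.sum_const, Finset.card_range, nsmul_eq_mul]; push_cast; ring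
  -- Bound for 𝒜₂
  have hbound2 : ∑ A ∈ 𝒜₂, (1 : ℝ) / (n.choose A.card) ≤ ((s : ℝ) + 1) * B := by
    have hmaps : ∀ A ∈ 𝒜₂, kg A ∈ Finset.range (s + 1) := by
      intro A hA
      rw [Finset.mem_range, Nat.lt_succ_iff, hkg, hs]
      have hcA := hcards A (Finset.mem_of_mem_filter A (Finset.filter_subset _ _ hA))
      exact Nat.sqrt_le_sqrt (by omega)
    rw [← Finset.sum_fiberwise_of_maps_to hmaps]
    have hinner : ∀ k ∈ Finset.range (s + 1),
        ∑ A ∈ 𝒜₂.filter (fun A => kg A = k), (1 : ℝ) / (n.choose A.card) ≤ B := by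
      intro k _
      set ℱ := 𝒜₂.filter (fun A => kg A = k) with hℱ
      rcases ℱ.eq_empty_or_nonempty with hemp | ⟨A₀, hA₀⟩
      · rw [hemp, Finset.sum_empty]; exact hB0
      · have hA₀' := Finset.mem_filter.mp hA₀
        have hkA₀ : kg A₀ = k := hA₀'.2
        have hp2A₀ : P2 A₀ := (Finset.mem_filter.mp hA₀'.1).2
        simp only [hP2, hkA₀] at hp2A₀
        -- hp2A₀ : n ≤ 2 * (b - k*k - k)
        have hsubA : ℱ ⊆ 𝒜 := fun A hA =>
          Finset.mem_of_mem_filter A (Finset.mem_of_mem_filter A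
            (Finset.mem_of_mem_filter A hA))
        have hfacts : ∀ A ∈ ℱ, a ≤ A.card ∧ A.card ≤ b ∧ k * k ≤ b - A.card
            ∧ b - A.card < (k+1) * (k+1) ∧ k ≤ b - A.card := by
          intro A hA
          have hcA := hcards A (hsubA hA)
          have hkA : Nat.sqrt (b - A.card) = k := (Finset.mem_filter.mp hA).2
          refine ⟨hcA.1, hcA.2, ?_, ?_, ?_⟩
          · rw [← hkA]; exact Nat.sqrt_le _
          · rw [← hkA]; exact Nat.lt_succ_sqrt _
          · rw [← hkA]; exact Nat.sqrt_le_self _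
        have hexp : (k+1)*(k+1) = k*k + 2*k + 1 := by ring
        refine (band_bound hC (p := 2 * (b - k * k - k) - n) (q := n) (by omega)
          le_rfl ℱ (sub_free hsubA hfree) ?_ ?_).trans_eq hBdef.symm
        · intro A hA
          obtain ⟨h1, h2, h3, h4, h5⟩ := hfacts A hA
          omega
        · intro A hA
          obtain ⟨h1, h2, h3, h4, h5⟩ := hfacts A hA
          have hdiv : (n - (2 * (b - k * k - k) - n)) / 2 = n - (b - k * k - k) := by
            omega
          rw [hdiv]
          exact ratio_lemma (s := k) (by omega) (by omega) (by omega) (by omega)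
            (by omega) (by omega)
    calc ∑ k ∈ Finset.range (s + 1), ∑ A ∈ 𝒜₂.filter (fun A => kg A = k),
          (1 : ℝ) / (n.choose A.card)
        ≤ ∑ k ∈ Finset.range (s + 1), B := Finset.sum_le_sum hinner
      _ = ((s : ℝ) + 1) * B := by
          rw [Finset.sum_const, Finset.card_range, nsmul_eq_mul]; push_cast; ring
  -- Bound for 𝒜₃
  have hbound3 : ∑ A ∈ 𝒜₃, (1 : ℝ) / (n.choose A.card) ≤ B := by
    have hsubA : 𝒜₃ ⊆ 𝒜 := fun A hA =>
      Finset.mem_of_mem_filter A (Finset.mem_of_mem_filter A hA)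
    refine (band_bound hC (p := 0) (q := n) (by omega) le_rfl 𝒜₃
      (sub_free hsubA hfree) ?_ ?_).trans_eq hBdef.symm
    · intro A hA
      have hcA := hcards A (hsubA hA)
      omega
    · intro A hA
      have hcA := hcards A (hsubA hA)
      have hA' := Finset.mem_filter.mp hA
      have hnp2 : ¬ P2 A := hA'.2
      have hnp1 : ¬ P1 A := (Finset.mem_filter.mp hA'.1).2
      simp only [hP1, not_le] at hnp1
      simp only [hP2, not_le] at hnp2
      have hf1 : kf A * kf A ≤ A.card - a := Nat.sqrt_le _
      have hf2 : A.card - a < (kf A + 1) * (kf A + 1) := Nat.lt_succ_sqrt _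
      have hg1 : kg A * kg A ≤ b - A.card := Nat.sqrt_le _
      have hg2 : b - A.card < (kg A + 1) * (kg A + 1) := Nat.lt_succ_sqrt _
      have hexp1 : (kf A + 1) * (kf A + 1) = kf A * kf A + 2 * kf A + 1 := by ring
      have hexp2 : (kg A + 1) * (kg A + 1) = kg A * kg A + 2 * kg A + 1 := by ring
      have hks1 : kf A ≤ s := Nat.sqrt_le_sqrt (by omega)
      have hks2 : kg A ≤ s := Nat.sqrt_le_sqrt (by omega)
      have hdiv : (n - 0) / 2 = n / 2 := by omega
      rw [hdiv]
      exact ratio_lemma (s := s + 1) (by omega) (by omega) (by omega) (by omega)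
        (by omega) (by omega)
  -- final combination
  have hsB : (s : ℝ) ≤ Real.sqrt X := by
    rw [Real.le_sqrt (Nat.cast_nonneg s) (by positivity)]
    have : ((s * s : ℕ) : ℝ) ≤ ((d : ℕ) : ℝ) := by exact_mod_cast hsd
    rw [hX]; push_cast at this ⊢; nlinarith [this]
  have hsqX : Real.sqrt X ≤ X ^ c := by
    rw [Real.sqrt_eq_rpow]
    exact Real.rpow_le_rpow_of_exponent_le hX1 hc.le
  have hsq1 : (1 : ℝ) ≤ Real.sqrt X := by
    rw [Real.le_sqrt (by norm_num) (by positivity)]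
    nlinarith [hX1]
  calc ∑ A ∈ 𝒜, (1 : ℝ) / (n.choose A.card)
      = (∑ A ∈ 𝒜₁, (1 : ℝ) / (n.choose A.card))
        + ((∑ A ∈ 𝒜₂, (1 : ℝ) / (n.choose A.card))
          + (∑ A ∈ 𝒜₃, (1 : ℝ) / (n.choose A.card))) := hsplit
    _ ≤ ((s : ℝ) + 1) * B + (((s : ℝ) + 1) * B + B) := by
        gcongr
    _ = (2 * (s : ℝ) + 3) * B := by ring
    _ ≤ (5 * B + 10002) * X ^ c := by
        have h1 : (2 * (s : ℝ) + 3) * B ≤ (5 * Real.sqrt X) * B :=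
          mul_le_mul_of_nonneg_right (by linarith) hB0
        have h2 : (5 * Real.sqrt X) * B ≤ (5 * X ^ c) * B :=
          mul_le_mul_of_nonneg_right (by linarith) hB0
        have h3 : (5 * X ^ c) * B = 5 * B * X ^ c := by ring
        have h4 : 5 * B * X ^ c ≤ (5 * B + 10002) * X ^ c :=
          mul_le_mul_of_nonneg_right (by linarith) hXc0
        linarith
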